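/- If y is a solution of the Chazy equation y''' = 2yy'' − 3(y')² and Δ is a nonvanishing function with y = (1/2)·Δ'/Δ, then Δ satisfies Rankin's equation 2Δ''''Δ³ − 10Δ'''Δ'Δ² − 3(Δ'')²Δ² + 24Δ''(Δ')²Δ − 13(Δ')⁴ = 0. -/

import Mathlib

/-- If `y` solves the Chazy equation and `Δ` is nonvanishing with `y = (1/2)Δ'/Δ`
(i.e. `2yΔ = Δ'`), then `Δ` satisfies Rankin's fourth-order equation. -/
theorem rankin_delta_equation (y Δ : ℂ → ℂ)
    (hy : ContDiff ℂ ⊤ y) (hΔ : ContDiff ℂ ⊤ Δ)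
    (hΔ0 : ∀ z : ℂ, Δ z ≠ 0)
    (hrel : ∀ z : ℂ, 2 * y z * Δ z = deriv Δ z)
    (hchazy : ∀ z : ℂ,
      deriv (deriv (deriv y)) z = 2 * y z * deriv (deriv y) z - 3 * (deriv y z) ^ 2) :
    ∀ z : ℂ,
      2 * deriv (deriv (deriv (deriv Δ))) z * (Δ z) ^ 3
        - 10 * deriv (deriv (deriv Δ)) z * deriv Δ z * (Δ z) ^ 2
        - 3 * (deriv (deriv Δ) z) ^ 2 * (Δ z) ^ 2
        + 24 * deriv (deriv Δ) z * (deriv Δ z) ^ 2 * Δ z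
        - 13 * (deriv Δ z) ^ 4 = 0 := by
  have hy' : ContDiff ℂ ((⊤ : ℕ∞) : WithTop ℕ∞) y := hy.of_le le_top
  have hΔ' : ContDiff ℂ ((⊤ : ℕ∞) : WithTop ℕ∞) Δ := hΔ.of_le le_top
  have hyd : Differentiable ℂ y := hy.differentiable (by simp)
  have hyd1 : Differentiable ℂ (deriv y) := by
    simpa using (hy'.iterate_deriv 1).differentiable (by simp)
  have hyd2 : Differentiable ℂ (deriv (deriv y)) := by
    simpa [Function.iterate_succ'] using
      (hy'.iterate_deriv 2).differentiable (by simp)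
  have hΔd : Differentiable ℂ Δ := hΔ.differentiable (by simp)
  -- level 1
  have h1 : deriv Δ = fun z => (2 * y z) * Δ z := funext fun z => by
    rw [← hrel z]
  -- level 2
  have hA1 : Differentiable ℂ (fun z => 2 * y z) := fun z => (hyd z).const_mul 2
  have h2 : deriv (deriv Δ) = fun z => (2 * deriv y z + 4 * y z * y z) * Δ z := by
    funext z
    rw [h1, deriv_fun_mul (hA1 z) (hΔd z), deriv_const_mul 2 (hyd z), ← hrel z]
    ring
  -- level 3
  have hA2 : Differentiable ℂ (fun z => 2 * deriv y z + 4 * y z * y z) :=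
    fun z => ((hyd1 z).const_mul 2).add (((hyd z).const_mul 4).mul (hyd z))
  have h3 : deriv (deriv (deriv Δ)) = fun z =>
      (2 * deriv (deriv y) z + 12 * y z * deriv y z + 8 * y z * y z * y z) * Δ z := by
    funext z
    rw [h2, deriv_fun_mul (hA2 z) (hΔd z),
      deriv_fun_add ((hyd1 z).const_mul 2) (((hyd z).const_mul 4).fun_mul (hyd z)),
      deriv_const_mul 2 (hyd1 z), deriv_fun_mul ((hyd z).const_mul 4) (hyd z),
      deriv_const_mul 4 (hyd z), ← hrel z]
    ring
  -- level 4
  have hA3 : Differentiable ℂ (fun z =>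
      2 * deriv (deriv y) z + 12 * y z * deriv y z + 8 * y z * y z * y z) :=
    fun z => ((((hyd2 z).const_mul 2).add
      (((hyd z).const_mul 12).mul (hyd1 z))).add
      ((((hyd z).const_mul 8).mul (hyd z)).mul (hyd z)))
  have h4 : ∀ z, deriv (deriv (deriv (deriv Δ))) z =
      (2 * deriv (deriv (deriv y)) z + 16 * y z * deriv (deriv y) z
        + 12 * deriv y z * deriv y z + 48 * y z * y z * deriv y z
        + 16 * y z * y z * y z * y z) * Δ z := by
    intro z
    rw [h3, deriv_fun_mul (hA3 z) (hΔd z),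
      deriv_fun_add (((hyd2 z).const_mul 2).fun_add (((hyd z).const_mul 12).fun_mul (hyd1 z)))
        ((((hyd z).const_mul 8).fun_mul (hyd z)).fun_mul (hyd z)),
      deriv_fun_add ((hyd2 z).const_mul 2) (((hyd z).const_mul 12).fun_mul (hyd1 z)),
      deriv_const_mul 2 (hyd2 z),
      deriv_fun_mul ((hyd z).const_mul 12) (hyd1 z), deriv_const_mul 12 (hyd z),
      deriv_fun_mul (((hyd z).const_mul 8).fun_mul (hyd z)) (hyd z),
      deriv_fun_mul ((hyd z).const_mul 8) (hyd z), deriv_const_mul 8 (hyd z), ← hrel z]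
    ring
  intro z
  rw [h4 z, hchazy z]
  have e3 := congrFun h3 z
  have e2 := congrFun h2 z
  have e1 := congrFun h1 z
  rw [e3, e2, e1]
  ring
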